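/- Let M be a finite set, v : 2^M → ℝ≥0 a monotone submodular valuation, and c > 0. Let S, A ⊆ M satisfy v(S) ≥ c and v(A) < c/3. Then ∑_{j ∈ S \ A} min( 2c/3, v(j | A) ) ≥ 2c/3. -/

import Mathlib

open Finset

lemma marginal_sum_bound
    {G : Type*} [Fintype G] [DecidableEq G]
    (v : Finset G → ℝ)
    (hsub : ∀ (S T : Finset G) (j : G), S ⊆ T →
      v (T ∪ {j}) - v T ≤ v (S ∪ {j}) - v S)
    (A : Finset G) :
    ∀ B : Finset G, v (A ∪ B) - v A ≤ ∑ j ∈ B \ A, (v (A ∪ {j}) - v A) := by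
  intro B
  induction B using Finset.induction with
  | empty => simp
  | insert j B hj IH =>
    by_cases hjA : j ∈ A
    · have h1 : A ∪ insert j B = A ∪ B := by
        ext x; simp only [mem_union, mem_insert]
        constructor
        · rintro (h | rfl | h) <;> simp_all
        · rintro (h | h) <;> simp_all
      have h2 : insert j B \ A = B \ A := by
        ext x; simp only [mem_sdiff, mem_insert]
        constructor
        · rintro ⟨rfl | h, h2⟩ <;> simp_all
        · rintro ⟨h, h2⟩; exact ⟨Or.inr h, h2⟩
      rw [h1, h2]; exact IH
    · have h2 : insert j B \ A = insert j (B \ A) := by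
        ext x; simp only [mem_sdiff, mem_insert]
        constructor
        · rintro ⟨rfl | h, h2⟩ <;> simp_all
        · rintro (rfl | ⟨h, h2⟩) <;> simp_all
      have hjBA : j ∉ B \ A := by simp [hj]
      rw [h2, Finset.sum_insert hjBA]
      have h1 : A ∪ insert j B = (A ∪ B) ∪ {j} := by
        ext x; simp only [mem_union, mem_insert, mem_singleton]; tauto
      have := hsub A (A ∪ B) j subset_union_left
      rw [h1]
      linarith

theorem sum_capped_marginals_over_set
    {G : Type*} [Fintype G] [DecidableEq G]
    (v : Finset G → ℝ) (hnn : ∀ S, 0 ≤ v S) (hempty : v ∅ = 0)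
    (hmono : ∀ S T : Finset G, S ⊆ T → v S ≤ v T)
    (hsub : ∀ (S T : Finset G) (j : G), S ⊆ T →
      v (T ∪ {j}) - v T ≤ v (S ∪ {j}) - v S)
    (c : ℝ) (hc : 0 < c)
    (S A : Finset G) (hS : v S ≥ c) (hA : v A < c / 3) :
    (∑ j ∈ S \ A, min (2 * c / 3) (v (A ∪ {j}) - v A)) ≥ 2 * c / 3 := by
  have hmarg : ∀ j : G, 0 ≤ v (A ∪ {j}) - v A := by
    intro j
    have := hmono A (A ∪ {j}) subset_union_left
    linarith
  by_cases hex : ∃ j ∈ S \ A, 2 * c / 3 ≤ v (A ∪ {j}) - v A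
  · obtain ⟨j, hjmem, hjge⟩ := hex
    have hsingle : min (2 * c / 3) (v (A ∪ {j}) - v A) ≤
        ∑ i ∈ S \ A, min (2 * c / 3) (v (A ∪ {i}) - v A) := by
      apply Finset.single_le_sum (fun i _ => le_min (by linarith) (hmarg i)) hjmem
    rw [min_eq_left hjge] at hsingle
    linarith
  · push_neg at hex
    have heq : ∀ j ∈ S \ A, min (2 * c / 3) (v (A ∪ {j}) - v A) = v (A ∪ {j}) - v A :=
      fun j hj => min_eq_right (le_of_lt (hex j hj))
    rw [Finset.sum_congr rfl heq]
    have h1 := marginal_sum_bound v hsub A S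
    have h2 := hmono S (A ∪ S) subset_union_right
    linarith
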